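/- arXiv:2109.08902 — 4 statements merged into one kernel-verified Lean document; each statement's English description precedes it below -/
import Mathlib

section
/- Let G = (V,E) be a finite simple graph with adjacency matrix A (zero diagonal) and let γ ∈ (0,1]. For x ∈ {0,1}^V with support V' = {i : x_i = 1}, the constraint Σ_{i∈V} x_i (γ x_i + Σ_{j∈V} (A_{ij} − γ) x_j) ≥ 0 holds if and only if V' is a γ-clique of G. Consequently, the optimal value of the 0–1 program: maximize Σ_{i∈V} x_i subject to x ∈ {0,1}^V and Σ_{i∈V} x_i (γ x_i + Σ_{j∈V} (A_{ij} − γ) x_j) ≥ 0, equals the γ-clique number ω_γ(G). -/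
open Finset

/-- Number of edges of `G` with both endpoints in `V'`. -/
def edgesIn {V : Type*} [Fintype V] [DecidableEq V] (G : SimpleGraph V)
    [DecidableRel G.Adj] (V' : Finset V) : ℕ :=
  (G.edgeFinset.filter fun e => ∀ v ∈ e, v ∈ V').card

/-- `V'` is a `γ`-clique of `G`. -/
def IsQuasiClique {V : Type*} [Fintype V] [DecidableEq V] (G : SimpleGraph V)
    [DecidableRel G.Adj] (γ : ℝ) (V' : Finset V) : Prop :=
  (edgesIn G V' : ℝ) ≥ γ * (V'.card.choose 2 : ℕ)

/-- The `γ`-clique number of `G`. -/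
noncomputable def quasiCliqueNum {V : Type*} [Fintype V] [DecidableEq V]
    (G : SimpleGraph V) [DecidableRel G.Adj] (γ : ℝ) : ℕ :=
  sSup {k : ℕ | ∃ V' : Finset V, IsQuasiClique G γ V' ∧ V'.card = k}

/-- The number of ordered adjacent pairs inside `S` is twice `edgesIn G S`. -/
lemma double_count {V : Type*} [Fintype V] [DecidableEq V] (G : SimpleGraph V)
    [DecidableRel G.Adj] (S : Finset V) :
    ((S ×ˢ S).filter fun p : V × V => G.Adj p.1 p.2).card = 2 * edgesIn G S := by
  classical
  let G' : SimpleGraph V :=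
    { Adj := fun i j => G.Adj i j ∧ i ∈ S ∧ j ∈ S
      symm := by
        constructor
        intro i j h
        exact ⟨h.1.symm, h.2.2, h.2.1⟩
      loopless := by
        constructor
        intro i h
        exact G.irrefl h.1 }
  haveI : DecidableRel G'.Adj := fun i j => instDecidableAnd
  have hE : G'.edgeFinset = G.edgeFinset.filter fun e => ∀ v ∈ e, v ∈ S := by
    ext e
    induction e using Sym2.ind with
    | _ a b =>
      simp only [SimpleGraph.mem_edgeFinset, Finset.mem_filter,
        SimpleGraph.mem_edgeSet, Sym2.mem_iff]
      constructor
      · rintro ⟨h, ha, hb⟩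
        exact ⟨h, fun v hv => by rcases hv with rfl | rfl <;> assumption⟩
      · rintro ⟨h, hv⟩
        exact ⟨h, hv a (Or.inl rfl), hv b (Or.inr rfl)⟩
  have hS : (Finset.univ.filter fun (p : V × V) => G'.Adj p.1 p.2)
      = (S ×ˢ S).filter fun p : V × V => G.Adj p.1 p.2 := by
    ext p
    simp only [Finset.mem_filter, Finset.mem_univ, Finset.mem_product, true_and]
    show (G.Adj p.1 p.2 ∧ p.1 ∈ S ∧ p.2 ∈ S) ↔ _
    tauto
  have := G'.two_mul_card_edgeFinset
  rw [hE, hS] at this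
  rw [← this]
  rfl

theorem pattillo_mip_correct {V : Type*} [Fintype V] [DecidableEq V]
    (G : SimpleGraph V) [DecidableRel G.Adj]
    (A : V → V → ℝ) (hA : ∀ i j, A i j = if G.Adj i j then 1 else 0)
    (γ : ℝ) (hγ : γ ∈ Set.Ioc (0 : ℝ) 1) :
    (∀ x : V → ℝ, (∀ i, x i = 0 ∨ x i = 1) →
      (∑ i, x i * (γ * x i + ∑ j, (A i j - γ) * x j) ≥ 0 ↔
        IsQuasiClique G γ (Finset.univ.filter fun i => x i = 1))) ∧
    sSup {k : ℕ | ∃ x : V → ℝ, (∀ i, x i = 0 ∨ x i = 1) ∧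
        ∑ i, x i * (γ * x i + ∑ j, (A i j - γ) * x j) ≥ 0 ∧
        (Finset.univ.filter fun i => x i = 1).card = k}
      = quasiCliqueNum G γ := by
  classical
  have main : ∀ x : V → ℝ, (∀ i, x i = 0 ∨ x i = 1) →
      (∑ i, x i * (γ * x i + ∑ j, (A i j - γ) * x j) ≥ 0 ↔
        IsQuasiClique G γ (Finset.univ.filter fun i => x i = 1)) := by
    intro x hx
    set S : Finset V := Finset.univ.filter fun i => x i = 1 with hSdef
    have hx1 : ∀ i ∈ S, x i = 1 := fun i hi => (Finset.mem_filter.mp hi).2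
    have hx0 : ∀ i ∉ S, x i = 0 := by
      intro i hi
      rcases hx i with h | h
      · exact h
      · exact absurd (Finset.mem_filter.mpr ⟨Finset.mem_univ i, h⟩) hi
    have hinner : ∀ i, ∑ j, (A i j - γ) * x j = ∑ j ∈ S, (A i j - γ) := by
      intro i
      rw [← Finset.sum_subset S.subset_univ (fun j _ hj => by rw [hx0 j hj, mul_zero])]
      exact Finset.sum_congr rfl fun j hj => by rw [hx1 j hj, mul_one]
    have hsum : ∑ i, x i * (γ * x i + ∑ j, (A i j - γ) * x j)
        = γ * S.card + (∑ i ∈ S, ∑ j ∈ S, A i j) - γ * S.card * S.card := by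
      rw [← Finset.sum_subset S.subset_univ
        (fun i _ hi => by rw [hx0 i hi, zero_mul])]
      have : ∀ i ∈ S, x i * (γ * x i + ∑ j, (A i j - γ) * x j)
          = γ + ∑ j ∈ S, (A i j - γ) := by
        intro i hi
        rw [hinner i, hx1 i hi]; ring
      rw [Finset.sum_congr rfl this, Finset.sum_add_distrib]
      simp only [Finset.sum_const, nsmul_eq_mul, Finset.sum_sub_distrib]
      ring
    have hAA : (∑ i ∈ S, ∑ j ∈ S, A i j) = 2 * edgesIn G S := by
      have : (∑ i ∈ S, ∑ j ∈ S, A i j)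
          = ∑ p ∈ S ×ˢ S, (if G.Adj p.1 p.2 then (1 : ℝ) else 0) := by
        rw [Finset.sum_product]
        exact Finset.sum_congr rfl fun i _ => Finset.sum_congr rfl fun j _ => hA i j
      rw [this, Finset.sum_boole]
      rw [show ((Finset.filter (fun p : V × V => G.Adj p.1 p.2) (S ×ˢ S)).card) = 2 * edgesIn G S from double_count G S]
      push_cast
      ring
    have hchoose : (S.card.choose 2 : ℝ) = S.card * (S.card - 1) / 2 :=
      by rw [Nat.cast_choose_two]
    have key : ∑ i, x i * (γ * x i + ∑ j, (A i j - γ) * x j)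
        = 2 * ((edgesIn G S : ℝ) - γ * (S.card.choose 2 : ℕ)) := by
      rw [hsum, hAA, hchoose]; ring
    rw [key]
    unfold IsQuasiClique
    constructor
    · intro h; nlinarith
    · intro h; nlinarith
  refine ⟨main, ?_⟩
  unfold quasiCliqueNum
  congr 1
  ext k
  constructor
  · rintro ⟨x, hx, hge, hcard⟩
    exact ⟨_, (main x hx).mp hge, hcard⟩
  · rintro ⟨V', hV', hcard⟩
    refine ⟨fun i => if i ∈ V' then (1 : ℝ) else 0, fun i => ?_, ?_, ?_⟩
    · by_cases h : i ∈ V' <;> simp [h]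
    · rw [main _ (fun i => by by_cases h : i ∈ V' <;> simp [h])]
      have : (Finset.univ.filter fun i => (if i ∈ V' then (1:ℝ) else 0) = 1) = V' := by
        ext i
        by_cases h : i ∈ V' <;> simp [h]
      rw [this]; exact hV'
    · have : (Finset.univ.filter fun i => (if i ∈ V' then (1:ℝ) else 0) = 1) = V' := by
        ext i
        by_cases h : i ∈ V' <;> simp [h]
      rw [this]; exact hcard
end

section
/- Let G = (V,E) be a finite simple graph with |V| = n and let γ ∈ (0,1]. Consider the program: maximize Σ_{i∈V} x_i over x ∈ {0,1}^V, reals z_{ij} ≥ 0 for {i,j} ∈ E, and reals s_t ≥ 0 for t ∈ {0,1,…,n}, subject to z_{ij} ≤ x_i and z_{ij} ≤ x_j for all {i,j} ∈ E, Σ_{t=0}^{n} s_t = 1, Σ_{i∈V} x_i = Σ_{t=0}^{n} t·s_t, and Σ_{{i,j}∈E} z_{ij} ≥ γ · Σ_{t=0}^{n} (t(t−1)/2)·s_t. Then the optimal value of this program equals the γ-clique number ω_γ(G). -/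
open Finset

/-- Discrete Jensen for `t ↦ t²`, via Cauchy–Schwarz. -/
lemma jensen_sq (n : ℕ) (s : ℕ → ℝ) (hs : ∀ t ∈ Finset.range n, 0 ≤ s t)
    (hsum : ∑ t ∈ Finset.range n, s t = 1) :
    (∑ t ∈ Finset.range n, (t : ℝ) * s t) ^ 2
      ≤ ∑ t ∈ Finset.range n, (t : ℝ) ^ 2 * s t := by
  have h := Finset.sum_mul_sq_le_sq_mul_sq (Finset.range n)
    (fun t => Real.sqrt (s t)) (fun t => Real.sqrt (s t) * t)
  have e1 : ∑ t ∈ Finset.range n, Real.sqrt (s t) * (Real.sqrt (s t) * t)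
      = ∑ t ∈ Finset.range n, (t : ℝ) * s t := by
    refine Finset.sum_congr rfl fun t ht => ?_
    rw [← mul_assoc, Real.mul_self_sqrt (hs t ht)]; ring
  have e2 : ∑ t ∈ Finset.range n, Real.sqrt (s t) ^ 2 = 1 := by
    rw [← hsum]
    exact Finset.sum_congr rfl fun t ht => Real.sq_sqrt (hs t ht)
  have e3 : ∑ t ∈ Finset.range n, (Real.sqrt (s t) * t) ^ 2
      = ∑ t ∈ Finset.range n, (t : ℝ) ^ 2 * s t := by
    refine Finset.sum_congr rfl fun t ht => ?_
    rw [mul_pow, Real.sq_sqrt (hs t ht)]; ring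
  rw [e1, e2, e3, one_mul] at h
  exact h

theorem veremyev_mip_correct {V : Type*} [Fintype V] [DecidableEq V]
    (G : SimpleGraph V) [DecidableRel G.Adj]
    (γ : ℝ) (hγ : γ ∈ Set.Ioc (0 : ℝ) 1) :
    sSup {k : ℕ | ∃ (x : V → ℝ) (z : Sym2 V → ℝ) (s : ℕ → ℝ),
        (∀ i, x i = 0 ∨ x i = 1) ∧
        (∀ e ∈ G.edgeFinset, 0 ≤ z e ∧ ∀ v ∈ e, z e ≤ x v) ∧
        (∀ t ∈ Finset.range (Fintype.card V + 1), 0 ≤ s t) ∧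
        ∑ t ∈ Finset.range (Fintype.card V + 1), s t = 1 ∧
        ∑ i, x i = ∑ t ∈ Finset.range (Fintype.card V + 1), (t : ℝ) * s t ∧
        ∑ e ∈ G.edgeFinset, z e
          ≥ γ * ∑ t ∈ Finset.range (Fintype.card V + 1),
              ((t : ℝ) * ((t : ℝ) - 1) / 2) * s t ∧
        (Finset.univ.filter fun i => x i = 1).card = k}
      = quasiCliqueNum G γ := by
  classical
  unfold quasiCliqueNum
  congr 1
  ext k
  simp only [Set.mem_setOf_eq]
  set n := Fintype.card V with hn
  constructor
  · -- MIP feasible point → quasi-clique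
    rintro ⟨x, z, s, hx01, hz, hs, hs1, hxs, hedge, hk⟩
    refine ⟨Finset.univ.filter fun i => x i = 1, ?_, hk⟩
    set V' := Finset.univ.filter fun i => x i = 1 with hV'
    have hxsum : ∑ i, x i = (V'.card : ℝ) := by
      rw [hV', Finset.card_filter]
      push_cast
      refine Finset.sum_congr rfl fun i _ => ?_
      rcases hx01 i with h | h <;> simp [h]
    set K : ℝ := (V'.card : ℝ) with hK
    have hKeq : ∑ t ∈ Finset.range (n + 1), (t : ℝ) * s t = K := by
      rw [← hxs, hxsum]
    -- Jensen
    have hjen : γ * (K * (K - 1) / 2)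
        ≤ γ * ∑ t ∈ Finset.range (n + 1), ((t : ℝ) * ((t : ℝ) - 1) / 2) * s t := by
      refine mul_le_mul_of_nonneg_left ?_ (le_of_lt hγ.1)
      have hsq := jensen_sq (n + 1) s hs hs1
      rw [hKeq] at hsq
      have hexp : ∑ t ∈ Finset.range (n + 1), ((t : ℝ) * ((t : ℝ) - 1) / 2) * s t
          = ((∑ t ∈ Finset.range (n + 1), (t : ℝ) ^ 2 * s t)
            - ∑ t ∈ Finset.range (n + 1), (t : ℝ) * s t) / 2 := by
        rw [← Finset.sum_sub_distrib, Finset.sum_div]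
        refine Finset.sum_congr rfl fun t _ => ?_
        ring
      rw [hexp, hKeq]
      linarith
    -- sum of z bounded by edgesIn
    have hzle : ∑ e ∈ G.edgeFinset, z e ≤ (edgesIn G V' : ℝ) := by
      unfold edgesIn
      rw [← Finset.sum_filter_add_sum_filter_not G.edgeFinset (fun e => ∀ v ∈ e, v ∈ V')]
      have h1 : ∑ e ∈ G.edgeFinset.filter (fun e => ∀ v ∈ e, v ∈ V'), z e
          ≤ ((G.edgeFinset.filter fun e => ∀ v ∈ e, v ∈ V').card : ℝ) := by
        rw [Finset.card_eq_sum_ones]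
        push_cast
        refine Finset.sum_le_sum fun e he => ?_
        rw [Finset.mem_filter] at he
        obtain ⟨he, hall⟩ := he
        obtain ⟨v, hv⟩ : ∃ v, v ∈ e := by
          induction e using Sym2.ind with | _ a b => exact ⟨a, Sym2.mem_mk_left a b⟩
        have := (hz e he).2 v hv
        have hxv : x v = 1 := by
          have := hall v hv
          rw [hV', Finset.mem_filter] at this
          exact this.2
        linarith [(hz e he).2 v hv]
      have h2 : ∑ e ∈ G.edgeFinset.filter (fun e => ¬ ∀ v ∈ e, v ∈ V'), z e ≤ 0 := by
        refine Finset.sum_nonpos fun e he => ?_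
        rw [Finset.mem_filter] at he
        obtain ⟨he, hnot⟩ := he
        push_neg at hnot
        obtain ⟨w, hw, hwV⟩ := hnot
        have hxw : x w = 0 := by
          rcases hx01 w with h | h
          · exact h
          · exfalso; exact hwV (by rw [hV', Finset.mem_filter]; exact ⟨Finset.mem_univ w, h⟩)
        have := (hz e he).2 w hw
        linarith
      linarith
    -- conclude
    unfold IsQuasiClique
    rw [Nat.cast_choose_two]
    have hfin := le_trans hjen (le_trans hedge hzle)
    rw [hK] at hfin
    linarith
  · -- quasi-clique → MIP feasible point
    rintro ⟨V', hq, hk⟩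
    have hmem : V'.card ∈ Finset.range (n + 1) := by
      rw [Finset.mem_range, Nat.lt_succ_iff, hn]
      exact Finset.card_le_univ V'
    refine ⟨fun i => if i ∈ V' then 1 else 0,
      fun e => if ∀ v ∈ e, v ∈ V' then 1 else 0,
      fun t => if t = V'.card then 1 else 0, ?_, ?_, ?_, ?_, ?_, ?_, ?_⟩
    · intro i; by_cases h : i ∈ V' <;> simp [h]
    · intro e he
      refine ⟨by positivity, fun v hv => ?_⟩
      show (if ∀ w ∈ e, w ∈ V' then (1 : ℝ) else 0) ≤ if v ∈ V' then 1 else 0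
      by_cases h : ∀ w ∈ e, w ∈ V'
      · rw [if_pos h, if_pos (h v hv)]
      · rw [if_neg h]
        split <;> norm_num
    · intro t _; positivity
    · rw [Finset.sum_ite_eq' (Finset.range (n + 1)) V'.card (fun _ => (1 : ℝ)),
        if_pos hmem]
    · have hl : ∑ i, (if i ∈ V' then (1 : ℝ) else 0) = (V'.card : ℝ) := by
        simp [Finset.sum_boole, Finset.filter_mem_eq_inter]
      have hr : ∑ t ∈ Finset.range (n + 1), (t : ℝ) * (if t = V'.card then 1 else 0)
          = (V'.card : ℝ) := by
        simp only [mul_ite, mul_one, mul_zero]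
        rw [Finset.sum_ite_eq' (Finset.range (n + 1)) V'.card (fun t => (t : ℝ)),
          if_pos hmem]
      rw [hl, hr]
    · have hl : ∑ e ∈ G.edgeFinset, (if ∀ v ∈ e, v ∈ V' then (1 : ℝ) else 0)
          = (edgesIn G V' : ℝ) := by
        rw [Finset.sum_boole]; rfl
      have hr : ∑ t ∈ Finset.range (n + 1),
            ((t : ℝ) * ((t : ℝ) - 1) / 2) * (if t = V'.card then 1 else 0)
          = (V'.card : ℝ) * ((V'.card : ℝ) - 1) / 2 := by
        simp only [mul_ite, mul_one, mul_zero]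
        rw [Finset.sum_ite_eq' (Finset.range (n + 1)) V'.card
          (fun t => (t : ℝ) * ((t : ℝ) - 1) / 2), if_pos hmem]
      rw [hl, hr]
      have := hq
      unfold IsQuasiClique at this
      rw [Nat.cast_choose_two] at this
      exact this
    · have hfil : (Finset.univ.filter fun i => (if i ∈ V' then (1 : ℝ) else 0) = 1) = V' := by
        ext i
        by_cases h : i ∈ V' <;> simp [h]
      rw [hfil, hk]
end

section
/- Let Q, Z₁, Z₂ ∈ ℝ^{n×n} be real matrices such that the 2n×2n block matrix [[Z₁, Q],[Qᵀ, Z₂]] is positive semidefinite. Then (1/2)(trace(Z₁) + trace(Z₂)) ≥ ‖Q‖_*, where ‖Q‖_* denotes the nuclear norm of Q, i.e. the sum of the square roots of the eigenvalues of QᵀQ. -/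
open Matrix

private lemma psd_trace_nonneg {n : ℕ} {M : Matrix (Fin n) (Fin n) ℝ}
    (hM : M.PosSemidef) : 0 ≤ M.trace := by
  rw [Matrix.trace]
  refine Finset.sum_nonneg fun i _ => ?_
  have h := hM.dotProduct_mulVec_nonneg (Pi.single i 1)
  simpa [single_dotProduct, Matrix.mulVec_single] using h

open scoped MatrixOrder in
private lemma psd_trace_mul_nonneg {n : ℕ} {A B : Matrix (Fin n) (Fin n) ℝ}
    (hA : A.PosSemidef) (hB : B.PosSemidef) : 0 ≤ (A * B).trace := by
  have h1 : (A * B).trace = (CFC.sqrt A * B * CFC.sqrt A).trace := by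
    conv_lhs => rw [← CFC.sqrt_mul_sqrt_self A (nonneg_iff_posSemidef.mpr hA)]
    rw [mul_assoc, trace_mul_comm]
  rw [h1]
  have h2 := hB.mul_mul_conjTranspose_same (CFC.sqrt A)
  rw [(nonneg_iff_posSemidef.mp (CFC.sqrt_nonneg A)).1.eq] at h2
  exact psd_trace_nonneg h2

private lemma diag_conj {n : ℕ} (M W : Matrix (Fin n) (Fin n) ℝ) (i : Fin n) :
    (Wᵀ * M * W) i i = (fun j => W j i) ⬝ᵥ (M *ᵥ fun j => W j i) := by
  simp only [Matrix.mul_apply, Matrix.transpose_apply, Matrix.mulVec, dotProduct,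
    Finset.sum_mul, Finset.mul_sum]
  rw [Finset.sum_comm]
  congr 1; ext k; congr 1; ext l; ring

theorem sdp_trace_ge_nuclearNorm {n : ℕ} (Q Z₁ Z₂ : Matrix (Fin n) (Fin n) ℝ)
    (hPSD : (Matrix.fromBlocks Z₁ Q Qᵀ Z₂).PosSemidef)
    (hH : (Qᵀ * Q).IsHermitian) :
    (1 / 2 : ℝ) * (Z₁.trace + Z₂.trace) ≥ ∑ i, Real.sqrt (hH.eigenvalues i) := by
  classical
  have hApsd : (Qᵀ * Q).PosSemidef := by
    have h := Matrix.posSemidef_conjTranspose_mul_self Q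
    rwa [Matrix.conjTranspose_eq_transpose_of_trivial] at h
  set lam : Fin n → ℝ := hH.eigenvalues with hlamdef
  have hlam_nonneg : ∀ i, 0 ≤ lam i := fun i => hApsd.eigenvalues_nonneg i
  set v : Fin n → Fin n → ℝ := fun i => ⇑(hH.eigenvectorBasis i) with hvdef
  have heig : ∀ i, (Qᵀ * Q) *ᵥ v i = lam i • v i := fun i => hH.mulVec_eigenvectorBasis i
  have hvv : ∀ i j, v i ⬝ᵥ v j = if i = j then 1 else 0 := by
    intro i j
    have h := hH.eigenvectorBasis.orthonormal
    rw [orthonormal_iff_ite] at h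
    have h2 := h i j
    rw [dotProduct_comm]
    simpa [PiLp.inner_apply, dotProduct, RCLike.inner_apply, starRingEnd_apply] using h2
  -- singular values and left singular vectors
  set σ : Fin n → ℝ := fun i => Real.sqrt (lam i) with hσdef
  set u : Fin n → Fin n → ℝ := fun i => (σ i)⁻¹ • (Q *ᵥ v i) with hudef
  have hQv2 : ∀ i j, (Q *ᵥ v i) ⬝ᵥ (Q *ᵥ v j) = lam i * (if i = j then 1 else 0) := by
    intro i j
    rw [Matrix.dotProduct_mulVec, ← Matrix.mulVec_transpose, Matrix.mulVec_mulVec,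
      heig i, smul_dotProduct, hvv i j, smul_eq_mul]
  have hQv0 : ∀ i, lam i = 0 → Q *ᵥ v i = 0 := by
    intro i h0
    have := hQv2 i i
    rw [h0, zero_mul] at this
    exact dotProduct_self_eq_zero.mp this
  have hσsq : ∀ i, σ i * σ i = lam i := fun i => Real.mul_self_sqrt (hlam_nonneg i)
  have huQv : ∀ i, u i ⬝ᵥ (Q *ᵥ v i) = σ i := by
    intro i
    rw [hudef]
    simp only [smul_dotProduct, smul_eq_mul]
    rw [hQv2 i i, if_pos rfl, mul_one]
    rcases eq_or_ne (lam i) 0 with h0 | h0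
    · simp [hσdef, h0]
    · have hσne : σ i ≠ 0 := fun h => h0 (by rw [← hσsq i, h, mul_zero])
      field_simp
      rw [sq, hσsq i]
  -- Z₁ and Z₂ are PSD
  have hZ₁ : Z₁.PosSemidef := by
    have h := hPSD.submatrix Sum.inl
    have he : (Matrix.fromBlocks Z₁ Q Qᵀ Z₂).submatrix Sum.inl Sum.inl = Z₁ := by
      ext i j; simp
    rwa [he] at h
  -- key per-index inequality
  have key : ∀ i, 2 * σ i ≤ u i ⬝ᵥ (Z₁ *ᵥ u i) + v i ⬝ᵥ (Z₂ *ᵥ v i) := by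
    intro i
    have h := hPSD.dotProduct_mulVec_nonneg (Sum.elim (u i) (-(v i)))
    have hstar : star (Sum.elim (u i) (-(v i))) = Sum.elim (u i) (-(v i)) := by
      simp [star_trivial]
    rw [hstar] at h
    have hsym : v i ⬝ᵥ (Qᵀ *ᵥ u i) = u i ⬝ᵥ (Q *ᵥ v i) := by
      rw [Matrix.mulVec_transpose, Matrix.dotProduct_mulVec, dotProduct_comm]
    simp only [Matrix.fromBlocks_mulVec, Sum.elim_comp_inl, Sum.elim_comp_inr,
      sumElim_dotProduct_sumElim, dotProduct_add, Matrix.mulVec_neg,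
      dotProduct_neg, neg_dotProduct, neg_neg] at h
    rw [hsym, huQv i] at h
    linarith
  -- the sum over v of Z₂ quadratic forms equals trace Z₂
  set V : Matrix (Fin n) (Fin n) ℝ := fun j i => v i j with hVdef
  have hVcol : ∀ i, (fun j => V j i) = v i := fun i => rfl
  have hVU : V = (hH.eigenvectorUnitary : Matrix (Fin n) (Fin n) ℝ) := by
    ext j i; simp [hVdef, hvdef]
  have hVorth : Vᵀ * V = 1 := by
    have h := hH.eigenvectorUnitary.2
    rw [Matrix.mem_unitaryGroup_iff'] at h
    calc Vᵀ * V = star V * V := by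
          rw [Matrix.star_eq_conjTranspose, Matrix.conjTranspose_eq_transpose_of_trivial]
      _ = 1 := by rw [hVU]; exact h
  have hVorth' : V * Vᵀ = 1 := by
    have := mul_eq_one_comm.mp hVorth
    exact this
  have htrZ₂ : ∑ i, v i ⬝ᵥ (Z₂ *ᵥ v i) = Z₂.trace := by
    have h1 : ∀ i, v i ⬝ᵥ (Z₂ *ᵥ v i) = (Vᵀ * Z₂ * V) i i := by
      intro i; rw [diag_conj, hVcol]
    calc ∑ i, v i ⬝ᵥ (Z₂ *ᵥ v i) = (Vᵀ * Z₂ * V).trace := by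
          rw [Matrix.trace]; exact Finset.sum_congr rfl fun i _ => h1 i
      _ = Z₂.trace := by
          rw [Matrix.trace_mul_cycle, hVorth', Matrix.one_mul]
  -- the sum over u of Z₁ quadratic forms is at most trace Z₁
  set U : Matrix (Fin n) (Fin n) ℝ := fun j i => u i j with hUdef
  have hUcol : ∀ i, (fun j => U j i) = u i := fun i => rfl
  set e : Fin n → ℝ := fun i => if lam i = 0 then 0 else 1 with hedef
  have hUtU : Uᵀ * U = Matrix.diagonal e := by
    ext i j
    rw [Matrix.diagonal_apply]
    have : (Uᵀ * U) i j = u i ⬝ᵥ u j := by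
      rw [Matrix.mul_apply]; rfl
    rw [this, hudef]
    simp only [smul_dotProduct, dotProduct_smul, smul_eq_mul]
    rw [hQv2 i j]
    rcases eq_or_ne i j with rfl | hij
    · rw [if_pos rfl, if_pos rfl, mul_one]
      rcases eq_or_ne (lam i) 0 with h0 | h0
      · simp [hedef, h0]
      · have hσne : σ i ≠ 0 := fun h => h0 (by rw [← hσsq i, h, mul_zero])
        rw [hedef]
        simp only [h0, if_neg, ite_false]
        field_simp
        rw [sq, hσsq i]
    · rw [if_neg hij, if_neg hij]; ring
  have hUe : U * Matrix.diagonal e = U := by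
    ext j i
    rw [Matrix.mul_diagonal]
    rcases eq_or_ne (lam i) 0 with h0 | h0
    · have : u i = 0 := by rw [hudef]; simp [hQv0 i h0]
      simp [hedef, h0, hUdef, this]
    · simp [hedef, h0]
  have hPproj : (U * Uᵀ) * (U * Uᵀ) = U * Uᵀ := by
    calc (U * Uᵀ) * (U * Uᵀ) = U * (Uᵀ * U) * Uᵀ := by
          rw [← Matrix.mul_assoc, Matrix.mul_assoc U Uᵀ U]
      _ = U * Uᵀ := by rw [hUtU, hUe]
  have hPsym : (U * Uᵀ)ᵀ = U * Uᵀ := by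
    rw [Matrix.transpose_mul, Matrix.transpose_transpose]
  have hIP : (1 - U * Uᵀ).PosSemidef := by
    have h := Matrix.posSemidef_conjTranspose_mul_self (1 - U * Uᵀ)
    rwa [Matrix.conjTranspose_eq_transpose_of_trivial, Matrix.transpose_sub,
      Matrix.transpose_one, hPsym, sub_mul, one_mul, mul_sub, mul_one, hPproj,
      sub_self, sub_zero] at h
  have hsumU : ∑ i, u i ⬝ᵥ (Z₁ *ᵥ u i) ≤ Z₁.trace := by
    have h1' : ∀ i, u i ⬝ᵥ (Z₁ *ᵥ u i) = (Uᵀ * Z₁ * U) i i := by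
      intro i; rw [diag_conj, hUcol]
    have h1 : ∑ i, u i ⬝ᵥ (Z₁ *ᵥ u i) = (Uᵀ * Z₁ * U).trace := by
      rw [Matrix.trace]
      exact Finset.sum_congr rfl fun i _ => h1' i
    have h2 : (Uᵀ * Z₁ * U).trace = (Z₁ * (U * Uᵀ)).trace := by
      rw [Matrix.trace_mul_cycle, Matrix.trace_mul_comm]
    have h3 : 0 ≤ (Z₁ * (1 - U * Uᵀ)).trace := psd_trace_mul_nonneg hZ₁ hIP
    rw [Matrix.mul_sub, Matrix.mul_one, Matrix.trace_sub] at h3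
    rw [h1, h2]
    linarith
  -- combine
  have hsum : 2 * ∑ i, σ i ≤ Z₁.trace + Z₂.trace := by
    have := Finset.sum_le_sum (fun i (_ : i ∈ Finset.univ) => key i)
    rw [Finset.sum_add_distrib] at this
    rw [htrZ₂] at this
    rw [Finset.mul_sum]
    calc ∑ i, 2 * σ i = ∑ i, 2 * σ i := rfl
      _ ≤ Z₁.trace + Z₂.trace := by
          have h2 : ∑ i, 2 * σ i ≤ (∑ i, u i ⬝ᵥ (Z₁ *ᵥ u i)) + Z₂.trace := by
            calc ∑ i, 2 * σ i = 2 * ∑ i, σ i := by rw [Finset.mul_sum]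
              _ ≤ _ := by rw [Finset.mul_sum]; exact this
          linarith
  have : ∑ i, Real.sqrt (hH.eigenvalues i) = ∑ i, σ i := rfl
  rw [this]
  linarith
end

section
/- Let Q ∈ ℝ^{n×n} be a real matrix. There exist symmetric matrices Z₁, Z₂ ∈ ℝ^{n×n} such that the 2n×2n block matrix [[Z₁, Q],[Qᵀ, Z₂]] is positive semidefinite and (1/2)(trace(Z₁) + trace(Z₂)) = ‖Q‖_*, where ‖Q‖_* denotes the nuclear norm of Q, i.e. the sum of the square roots of the eigenvalues of QᵀQ. -/
open Matrix

theorem sdp_nuclearNorm_attained {n : ℕ} (Q : Matrix (Fin n) (Fin n) ℝ)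
    (hH : (Qᵀ * Q).IsHermitian) :
    ∃ Z₁ Z₂ : Matrix (Fin n) (Fin n) ℝ, Z₁.IsSymm ∧ Z₂.IsSymm ∧
      (Matrix.fromBlocks Z₁ Q Qᵀ Z₂).PosSemidef ∧
      (1 / 2 : ℝ) * (Z₁.trace + Z₂.trace) = ∑ i, Real.sqrt (hH.eigenvalues i) := by
  classical
  have hQt : Qᴴ = Qᵀ := Matrix.conjTranspose_eq_transpose_of_trivial Q
  have hPSD : (Qᵀ * Q).PosSemidef := by
    rw [← hQt]; exact Matrix.posSemidef_conjTranspose_mul_self Q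
  set d : Fin n → ℝ := hH.eigenvalues with hd
  have hd0 : ∀ i, 0 ≤ d i := hPSD.eigenvalues_nonneg
  set V : Matrix (Fin n) (Fin n) ℝ := (hH.eigenvectorUnitary : Matrix (Fin n) (Fin n) ℝ)
    with hVdef
  have hstarV : star V = Vᵀ := by
    rw [Matrix.star_eq_conjTranspose, Matrix.conjTranspose_eq_transpose_of_trivial]
  have hVmem : V ∈ Matrix.unitaryGroup (Fin n) ℝ := (hH.eigenvectorUnitary).2
  have hVV' : V * Vᵀ = 1 := by
    rw [← hstarV]; exact Matrix.mem_unitaryGroup_iff.mp hVmem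
  have hVV : Vᵀ * V = 1 := by
    rw [← hstarV]; exact Matrix.mem_unitaryGroup_iff'.mp hVmem
  have hspec : Qᵀ * Q = V * Matrix.diagonal d * Vᵀ := by
    have := hH.spectral_theorem
    rwa [Unitary.conjStarAlgAut_apply, hstarV, RCLike.ofReal_real_eq_id, Function.id_comp] at this
  -- the auxiliary diagonal matrices
  set E : Matrix (Fin n) (Fin n) ℝ := Matrix.diagonal (fun i => Real.sqrt (d i)) with hE
  set P : Matrix (Fin n) (Fin n) ℝ :=
    Matrix.diagonal (fun i => if d i = 0 then 0 else (Real.sqrt (d i))⁻¹) with hP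
  set J : Matrix (Fin n) (Fin n) ℝ :=
    Matrix.diagonal (fun i => if d i = 0 then (0 : ℝ) else 1) with hJ
  have hsne : ∀ i, d i ≠ 0 → Real.sqrt (d i) ≠ 0 := fun i h =>
    Real.sqrt_ne_zero'.mpr (lt_of_le_of_ne (hd0 i) (Ne.symm h))
  have hPE : P * E = J := by
    rw [hP, hE, hJ, Matrix.diagonal_mul_diagonal]
    have hfun : (fun i => (if d i = 0 then (0:ℝ) else (Real.sqrt (d i))⁻¹) * Real.sqrt (d i))
        = fun i => if d i = 0 then (0:ℝ) else 1 := by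
      funext i
      by_cases h : d i = 0
      · simp [h]
      · simp [h, inv_mul_cancel₀ (hsne i h)]
    rw [hfun]
  have hEP : E * P = J := by
    rw [hP, hE, hJ, Matrix.diagonal_mul_diagonal]
    have hfun : (fun i => Real.sqrt (d i) * (if d i = 0 then (0:ℝ) else (Real.sqrt (d i))⁻¹))
        = fun i => if d i = 0 then (0:ℝ) else 1 := by
      funext i
      by_cases h : d i = 0
      · simp [h]
      · simp [h, mul_inv_cancel₀ (hsne i h)]
    rw [hfun]
  -- Q * V * J = Q * V
  have hQVJ : Q * V * J = Q * V := by
    have hW : (Q * V)ᵀ * (Q * V) = Matrix.diagonal d := by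
      rw [Matrix.transpose_mul]
      calc Vᵀ * Qᵀ * (Q * V) = Vᵀ * (Qᵀ * Q) * V := by simp only [mul_assoc]
        _ = Vᵀ * (V * Matrix.diagonal d * Vᵀ) * V := by rw [hspec]
        _ = (Vᵀ * V) * (Matrix.diagonal d * (Vᵀ * V)) := by simp only [mul_assoc]
        _ = Matrix.diagonal d := by rw [hVV, one_mul, mul_one]
    ext k i
    rw [hJ, Matrix.mul_diagonal]
    by_cases h : d i = 0
    · have h2 : ((Q * V)ᵀ * (Q * V)) i i = ∑ k, (Q * V) k i * (Q * V) k i := by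
        rw [Matrix.mul_apply]
        exact Finset.sum_congr rfl fun k _ => by rw [Matrix.transpose_apply]
      have hsum : ∑ k, (Q * V) k i * (Q * V) k i = 0 := by
        rw [← h2, hW, Matrix.diagonal_apply_eq, h]
      have hzero : (Q * V) k i = 0 := mul_self_eq_zero.mp
        ((Finset.sum_eq_zero_iff_of_nonneg
          (fun k _ => mul_self_nonneg ((Q * V) k i))).mp hsum k (Finset.mem_univ k))
      rw [hzero, zero_mul]
    · rw [if_neg h, mul_one]
  set M : Matrix (Fin n) (Fin n) ℝ := V * P * Vᵀ with hM
  set A : Matrix (Fin n) (Fin n) ℝ := Q * M with hA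
  set R : Matrix (Fin n) (Fin n) ℝ := V * E * Vᵀ with hR
  set Z₁ : Matrix (Fin n) (Fin n) ℝ := Q * M * Qᵀ with hZ1
  have hMsymm : Mᵀ = M := by
    rw [hM, Matrix.transpose_mul, Matrix.transpose_mul, Matrix.transpose_transpose,
      hP, Matrix.diagonal_transpose]
    simp only [mul_assoc]
  have hRsymm : Rᵀ = R := by
    rw [hR, Matrix.transpose_mul, Matrix.transpose_mul, Matrix.transpose_transpose,
      hE, Matrix.diagonal_transpose]
    simp only [mul_assoc]
  have hAR : A * R = Q := by
    calc A * R = Q * V * (P * (Vᵀ * V) * E) * Vᵀ := by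
          rw [hA, hM, hR]; simp only [mul_assoc]
      _ = Q * V * J * Vᵀ := by rw [hVV, mul_one, hPE]
      _ = Q := by rw [hQVJ, mul_assoc, hVV', mul_one]
  have hRA : R * Aᵀ = Qᵀ := by
    have h1 : (A * R)ᵀ = Rᵀ * Aᵀ := Matrix.transpose_mul A R
    rw [hAR, hRsymm] at h1
    exact h1.symm
  have hQA : Q * Aᵀ = Z₁ := by
    rw [hA, Matrix.transpose_mul, hMsymm, hZ1]; simp only [mul_assoc]
  -- positive semidefiniteness
  have hRpsd : R.PosSemidef := by
    have hEpsd : E.PosSemidef := by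
      rw [hE]
      exact Matrix.posSemidef_diagonal_iff.mpr fun i => Real.sqrt_nonneg (d i)
    have := hEpsd.mul_mul_conjTranspose_same V
    rwa [Matrix.conjTranspose_eq_transpose_of_trivial, ← hR] at this
  set B : Matrix ((Fin n) ⊕ (Fin n)) (Fin n) ℝ := Matrix.fromRows A 1 with hB
  have hblock : B * R * Bᴴ = Matrix.fromBlocks Z₁ Q Qᵀ R := by
    rw [Matrix.conjTranspose_eq_transpose_of_trivial, hB, Matrix.fromRows_mul,
      Matrix.transpose_fromRows, Matrix.transpose_one, hAR, one_mul,
      Matrix.fromRows_mul_fromCols, hQA, hRA, mul_one, mul_one]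
  refine ⟨Z₁, R, ?_, ?_, ?_, ?_⟩
  · rw [Matrix.IsSymm, hZ1, Matrix.transpose_mul, Matrix.transpose_mul,
      Matrix.transpose_transpose, hMsymm]
    simp only [mul_assoc]
  · exact hRsymm
  · have := hRpsd.mul_mul_conjTranspose_same B
    rwa [hblock] at this
  -- traces
  · have htr2 : R.trace = ∑ i, Real.sqrt (d i) := by
      rw [hR, Matrix.trace_mul_cycle, hVV, one_mul, hE, Matrix.trace_diagonal]
    have htr1 : Z₁.trace = ∑ i, Real.sqrt (d i) := by
      have h2 : Z₁.trace = (Qᵀ * Q * M).trace := by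
        rw [hZ1, Matrix.trace_mul_cycle]
      rw [h2, hspec, hM]
      have h3 : V * Matrix.diagonal d * Vᵀ * (V * P * Vᵀ)
          = V * (Matrix.diagonal d * P) * Vᵀ := by
        calc V * Matrix.diagonal d * Vᵀ * (V * P * Vᵀ)
            = V * (Matrix.diagonal d * ((Vᵀ * V) * (P * Vᵀ))) := by simp only [mul_assoc]
          _ = V * (Matrix.diagonal d * P) * Vᵀ := by
              rw [hVV, one_mul]; simp only [mul_assoc]
      rw [h3, Matrix.trace_mul_cycle, hVV, one_mul, hP,
        Matrix.diagonal_mul_diagonal, Matrix.trace_diagonal]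
      refine Finset.sum_congr rfl fun i _ => ?_
      by_cases h : d i = 0
      · simp [h]
      · rw [if_neg h]
        field_simp
        exact Real.div_sqrt
    rw [htr1, htr2]; ring
end
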